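/- If both logits vectors are zero-mean, Σ_j z^s_j = 0 and Σ_j z^t_j = 0, then lim_{T→∞} T·(p^s_i(T) − p^t_i(T)) = (z^s_i − z^t_i)/K for every i. -/

import Mathlib

open Filter

noncomputable def softmax (K : ℕ) (T : ℝ) (z : Fin K → ℝ) (i : Fin K) : ℝ :=
  Real.exp (z i / T) / ∑ j, Real.exp (z j / T)

lemma aux_hasDerivAt (K : ℕ) (hK : 1 ≤ K) (z : Fin K → ℝ) (hz : ∑ j, z j = 0) (i : Fin K) :
    HasDerivAt (fun x : ℝ => Real.exp (z i * x) / ∑ j, Real.exp (z j * x)) (z i / K) 0 := by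
  have hKne : (K : ℝ) ≠ 0 := Nat.cast_ne_zero.mpr (by omega)
  have hnum : HasDerivAt (fun x : ℝ => Real.exp (z i * x)) (z i) 0 := by
    have := ((hasDerivAt_id (0 : ℝ)).const_mul (z i)).exp
    simpa using this
  have hden : HasDerivAt (fun x : ℝ => ∑ j, Real.exp (z j * x)) 0 0 := by
    have h : HasDerivAt (fun x : ℝ => ∑ j, Real.exp (z j * x)) (∑ j, z j) 0 := by
      apply HasDerivAt.fun_sum
      intro j _
      have := ((hasDerivAt_id (0 : ℝ)).const_mul (z j)).exp
      simpa using this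
    rwa [hz] at h
  have hden0 : (∑ j, Real.exp (z j * 0)) = (K : ℝ) := by simp
  have := hnum.div hden (by rw [hden0]; exact hKne)
  refine this.congr_deriv ?_
  rw [hden0]
  simp
  field_simp

theorem kd_grad_limit_zero_mean (K : ℕ) (hK : 1 ≤ K) (zt zs : Fin K → ℝ)
    (hs : ∑ j, zs j = 0) (ht : ∑ j, zt j = 0) :
    ∀ i, Tendsto (fun T : ℝ => T * (softmax K T zs i - softmax K T zt i)) atTop
      (nhds ((zs i - zt i) / (K : ℝ))) := by
  intro i
  set F : ℝ → ℝ := fun x =>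
    Real.exp (zs i * x) / ∑ j, Real.exp (zs j * x)
      - Real.exp (zt i * x) / ∑ j, Real.exp (zt j * x) with hF
  have hKne : (K : ℝ) ≠ 0 := Nat.cast_ne_zero.mpr (by omega)
  have hd : HasDerivAt F ((zs i - zt i) / K) 0 := by
    have := (aux_hasDerivAt K hK zs hs i).sub (aux_hasDerivAt K hK zt ht i)
    rwa [← sub_div] at this
  have hF0 : F 0 = 0 := by
    simp [hF]
  have hslope : Tendsto (slope F 0) (nhdsWithin 0 {(0:ℝ)}ᶜ) (nhds ((zs i - zt i) / K)) :=
    hasDerivAt_iff_tendsto_slope.mp hd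
  have hinv : Tendsto (fun T : ℝ => T⁻¹) atTop (nhdsWithin 0 {(0:ℝ)}ᶜ) := by
    apply tendsto_nhdsWithin_of_tendsto_nhds_of_eventually_within
    · exact tendsto_inv_atTop_zero
    · filter_upwards [eventually_gt_atTop (0:ℝ)] with T hT
      exact (inv_pos.mpr hT).ne'
  have := hslope.comp hinv
  apply this.congr'
  filter_upwards [eventually_gt_atTop (0:ℝ)] with T hT
  have hTne : T ≠ 0 := hT.ne'
  simp only [Function.comp, slope_def_field, hF0, sub_zero]
  rw [div_eq_mul_inv, inv_inv]
  simp only [hF, softmax, mul_comm]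
  congr 2
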